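/- Let r ≥ 2 and let T, T' be complete r-partite graphs on the same vertex set where T' is obtained from T by moving vertices between two parts so that the number of edges does not decrease and the number of copies of each of K_{a,a}, K_{a-1,a}, K_{a-1,a-1}, K_{a-2,a} within the union of those two parts does not decrease. Then for each of the complete r-partite graphs K = K_{a-1,a,...,a}, K' = K_{a-2,a,...,a}, K'' = K_{a-1,a-1,a,...,a}: the number of copies in T' is at least the number of copies in T. -/

import Mathlib

open SimpleGraph Finset

/-- `G` contains a copy of `F`. -/
def Graph.Contains {α β : Type*} (F : SimpleGraph α) (G : SimpleGraph β) : Prop :=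
  ∃ f : α ↪ β, ∀ ⦃a b : α⦄, F.Adj a b → G.Adj (f a) (f b)

/-- The number of subgraphs of `G` isomorphic to `H`, i.e. `N(H, G)`. -/
noncomputable def Graph.copyCount {α β : Type*} (H : SimpleGraph α) (G : SimpleGraph β) : ℕ :=
  Set.ncard {G' : G.Subgraph | Nonempty (H ≃g G'.coe)}

/-- The join `G + G'` of two graphs. -/
def Graph.join {α β : Type*} (G : SimpleGraph α) (H : SimpleGraph β) :
    SimpleGraph (α ⊕ β) where
  Adj x y :=
    match x, y with
    | Sum.inl a, Sum.inl b => G.Adj a b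
    | Sum.inr a, Sum.inr b => H.Adj a b
    | Sum.inl _, Sum.inr _ => True
    | Sum.inr _, Sum.inl _ => True
  symm := ⟨by rintro (a | a) (b | b) h <;> simp_all <;> exact h.symm⟩
  loopless := ⟨by rintro (a | a) h <;> simp_all⟩

/-- `s` is the minimum size of a color class over proper `(r+1)`-colorings of `F` (σ(F) = s). -/
def Graph.IsSigma {α : Type*} (F : SimpleGraph α) (r s : ℕ) : Prop :=
  IsLeast {k : ℕ | ∃ (C : F.Coloring (Fin (r + 1))) (i : Fin (r + 1)),
    k = {v | C v = i}.ncard} s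

namespace S19
variable {α β γ : Type*}

/-- families of vertex sets with prescribed sizes, cross-parts in different host classes -/
def Dat {s : ℕ} (b : Fin s → ℕ) (p : β → γ) : Set (Fin s → Finset β) :=
  {A | (∀ i, (A i).card = b i) ∧ ∀ ⦃i j⦄, i ≠ j → ∀ x ∈ A i, ∀ y ∈ A j, p x ≠ p y}

def Stab {s : ℕ} (b : Fin s → ℕ) : Set (Equiv.Perm (Fin s)) :=
  {τ | (∀ i, b (τ i) = b i) ∧ ∀ i, b i = 0 → τ i = i}

lemma Dat.disj {s : ℕ} {b : Fin s → ℕ} {p : β → γ} {A : Fin s → Finset β}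
    (hA : A ∈ Dat b p) {i j : Fin s} (hij : i ≠ j) {x : β} (hx : x ∈ A i) (hy : x ∈ A j) :
    False := hA.2 hij x hx x hy rfl

/-- the subgraph associated to a family -/
def mk {s : ℕ} {b : Fin s → ℕ} {p : β → γ} (G : SimpleGraph β)
    (hG : ∀ x y, G.Adj x y ↔ p x ≠ p y) (A : Fin s → Finset β) (hA : A ∈ Dat b p) :
    G.Subgraph where
  verts := ⋃ i, ↑(A i)
  Adj x y := ∃ i j, i ≠ j ∧ x ∈ A i ∧ y ∈ A j
  adj_sub := by rintro x y ⟨i, j, hij, hx, hy⟩; exact (hG x y).2 (hA.2 hij x hx y hy)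
  edge_vert := by rintro x y ⟨i, j, hij, hx, hy⟩; exact Set.mem_iUnion.2 ⟨i, hx⟩
  symm := ⟨by rintro x y ⟨i, j, hij, hx, hy⟩; exact ⟨j, i, hij.symm, hy, hx⟩⟩

lemma mem_copies {s : ℕ} [Fintype α] [DecidableEq β] {b : Fin s → ℕ} {p : β → γ}
    (q : α → Fin s) (F : SimpleGraph α) (G : SimpleGraph β)
    (hF : ∀ u v, F.Adj u v ↔ q u ≠ q v) (hG : ∀ x y, G.Adj x y ↔ p x ≠ p y)
    (hb : ∀ i, b i = Fintype.card {u // q u = i})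
    (A : Fin s → Finset β) (hA : A ∈ Dat b p) :
    Nonempty (F ≃g (mk G hG A hA).coe) := by
  classical
  have hcard : ∀ i : Fin s, Fintype.card {u // q u = i} = Fintype.card (↥(A i)) := by
    intro i; rw [← hb i, Fintype.card_coe, hA.1 i]
  let e : ∀ i : Fin s, {u // q u = i} ≃ ↥(A i) := fun i => Fintype.equivOfCardEq (hcard i)
  let g : (Σ i : Fin s, ↥(A i)) → ↥(mk G hG A hA).verts := fun x =>
    ⟨(x.2 : β), Set.mem_iUnion.2 ⟨x.1, x.2.2⟩⟩
  have hginj : Function.Injective g := by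
    rintro ⟨i, x⟩ ⟨j, y⟩ hxy
    have hval : (x : β) = (y : β) := congrArg Subtype.val hxy
    have hij : i = j := by
      by_contra h; exact hA.2 h _ x.2 _ (hval ▸ y.2) rfl
    subst hij
    exact congrArg _ (Subtype.ext hval)
  have hgsurj : Function.Surjective g := by
    rintro ⟨x, hx⟩
    obtain ⟨i, hxi⟩ := Set.mem_iUnion.1 hx
    exact ⟨⟨i, ⟨x, hxi⟩⟩, rfl⟩
  let h1 : α ≃ Σ i : Fin s, {u // q u = i} := (Equiv.sigmaFiberEquiv q).symm
  let f : α ≃ ↥(mk G hG A hA).verts :=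
    h1.trans ((Equiv.sigmaCongrRight e).trans (Equiv.ofBijective g ⟨hginj, hgsurj⟩))
  have h1val : ∀ u, ((h1 u).2 : α) = u := fun u =>
    Equiv.apply_symm_apply (Equiv.sigmaFiberEquiv q) u
  have h1fst : ∀ u, (h1 u).1 = q u := by
    intro u
    conv_rhs => rw [← h1val u]
    exact ((h1 u).2.2).symm
  have hfmem : ∀ u, ((f u : β) ∈ A (q u)) := by
    intro u
    have : (f u : β) ∈ A (h1 u).1 := (e (h1 u).1 (h1 u).2).2
    rwa [h1fst u] at this
  refine ⟨⟨f, ?_⟩⟩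
  intro u v
  show (mk G hG A hA).Adj (f u : β) (f v : β) ↔ F.Adj u v
  rw [hF]
  constructor
  · rintro ⟨i, j, hij, hx, hy⟩
    have hi : i = q u := by
      by_contra h; exact hA.2 h _ hx _ (hfmem u) rfl
    have hj : j = q v := by
      by_contra h; exact hA.2 h _ hy _ (hfmem v) rfl
    rw [hi, hj] at hij; exact hij
  · intro h
    exact ⟨q u, q v, h, hfmem u, hfmem v⟩

lemma exists_rep {s : ℕ} [Fintype α] [DecidableEq β] {b : Fin s → ℕ} {p : β → γ}
    (q : α → Fin s) (F : SimpleGraph α) (G : SimpleGraph β)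
    (hF : ∀ u v, F.Adj u v ↔ q u ≠ q v) (hG : ∀ x y, G.Adj x y ↔ p x ≠ p y)
    (hb : ∀ i, b i = Fintype.card {u // q u = i})
    (G' : G.Subgraph) (hG' : Nonempty (F ≃g G'.coe)) :
    ∃ A, ∃ hA : A ∈ Dat b p, mk G hG A hA = G' := by
  classical
  obtain ⟨e⟩ := hG'
  let A : Fin s → Finset β := fun i =>
    (univ.filter (fun u => q u = i)).image (fun u => (e u : β))
  have hmemA : ∀ i (x : β), x ∈ A i ↔ ∃ u, q u = i ∧ (e u : β) = x := by
    intro i x; simp [A]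
  have einj : Function.Injective (fun u => (e u : β)) := fun u v h =>
    e.toEquiv.injective (Subtype.ext h)
  have hA : A ∈ Dat b p := by
    constructor
    · intro i
      rw [Finset.card_image_of_injective _ einj, hb i, Fintype.card_subtype]
    · rintro i j hij x hx y hy
      obtain ⟨u, hu, hux⟩ := (hmemA i x).1 hx
      obtain ⟨v, hv, hvy⟩ := (hmemA j y).1 hy
      have hadj : F.Adj u v := (hF u v).2 (by rw [hu, hv]; exact hij)
      have : G'.Adj (e u : β) (e v : β) := e.map_rel_iff.2 hadj
      have := G'.adj_sub this
      rw [hux, hvy] at this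
      exact (hG x y).1 this
  refine ⟨A, hA, ?_⟩
  apply SimpleGraph.Subgraph.ext
  · ext x
    simp only [mk, Set.mem_iUnion, Finset.mem_coe]
    constructor
    · rintro ⟨i, hi⟩
      obtain ⟨u, _, hux⟩ := (hmemA i x).1 hi
      exact hux ▸ (e u).2
    · intro hx
      refine ⟨q (e.symm ⟨x, hx⟩), (hmemA _ x).2 ⟨e.symm ⟨x, hx⟩, rfl, ?_⟩⟩
      rw [e.apply_symm_apply]
  · ext x y
    show (∃ i j, i ≠ j ∧ x ∈ A i ∧ y ∈ A j) ↔ G'.Adj x y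
    constructor
    · rintro ⟨i, j, hij, hx, hy⟩
      obtain ⟨u, hu, hux⟩ := (hmemA i x).1 hx
      obtain ⟨v, hv, hvy⟩ := (hmemA j y).1 hy
      have hadj : F.Adj u v := (hF u v).2 (by rw [hu, hv]; exact hij)
      have : G'.Adj (e u : β) (e v : β) := e.map_rel_iff.2 hadj
      rwa [hux, hvy] at this
    · intro h
      have hx : x ∈ G'.verts := G'.edge_vert h
      have hy : y ∈ G'.verts := G'.edge_vert h.symm
      have hcoe : G'.coe.Adj ⟨x, hx⟩ ⟨y, hy⟩ := h
      set u := e.symm ⟨x, hx⟩ with hu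
      set v := e.symm ⟨y, hy⟩ with hv
      have hadj : F.Adj u v := by
        rw [← e.map_rel_iff]
        rw [hu, hv, e.apply_symm_apply, e.apply_symm_apply]
        exact hcoe
      refine ⟨q u, q v, (hF u v).1 hadj, ?_, ?_⟩
      · exact (hmemA _ x).2 ⟨u, rfl, by rw [hu, e.apply_symm_apply]⟩
      · exact (hmemA _ y).2 ⟨v, rfl, by rw [hv, e.apply_symm_apply]⟩

lemma act_mem {s : ℕ} {b : Fin s → ℕ} {p : β → γ} {A : Fin s → Finset β}
    (hA : A ∈ Dat b p) (τ : Equiv.Perm (Fin s)) (hτ : τ ∈ Stab b) :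
    (fun i => A (τ i)) ∈ Dat b p := by
  constructor
  · intro i; rw [hA.1 (τ i), hτ.1 i]
  · intro i j hij x hx y hy
    exact hA.2 (fun h => hij (τ.injective h)) x hx y hy

lemma mk_act {s : ℕ} {b : Fin s → ℕ} {p : β → γ} (G : SimpleGraph β)
    (hG : ∀ x y, G.Adj x y ↔ p x ≠ p y) {A : Fin s → Finset β}
    (hA : A ∈ Dat b p) (τ : Equiv.Perm (Fin s)) (hτ : τ ∈ Stab b) :
    mk G hG _ (act_mem hA τ hτ) = mk G hG A hA := by
  apply SimpleGraph.Subgraph.ext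
  · show ⋃ i, _ = ⋃ i, _
    exact τ.iSup_congr (fun i => rfl)
  · ext x y
    show (∃ i j, i ≠ j ∧ x ∈ A (τ i) ∧ y ∈ A (τ j)) ↔ ∃ i j, i ≠ j ∧ x ∈ A i ∧ y ∈ A j
    constructor
    · rintro ⟨i, j, hij, hx, hy⟩
      exact ⟨τ i, τ j, fun h => hij (τ.injective h), hx, hy⟩
    · rintro ⟨i, j, hij, hx, hy⟩
      refine ⟨τ.symm i, τ.symm j, fun h => hij ?_, by simpa using hx, by simpa using hy⟩
      have := congrArg τ h
      simpa using this

lemma eu {s : ℕ} {b : Fin s → ℕ} {p : β → γ} (G : SimpleGraph β)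
    (hG : ∀ x y, G.Adj x y ↔ p x ≠ p y) {A A' : Fin s → Finset β}
    (hA : A ∈ Dat b p) (hA' : A' ∈ Dat b p)
    (h : mk G hG A hA = mk G hG A' hA') :
    ∃! τ : ↥(Stab b), ∀ i, A' i = A (τ.1 i) := by
  classical
  have hv : (⋃ i, ↑(A i) : Set β) = ⋃ i, ↑(A' i) := congrArg SimpleGraph.Subgraph.verts h
  have hadj : ∀ x y : β, (∃ i j, i ≠ j ∧ x ∈ A i ∧ y ∈ A j) ↔
      (∃ i j, i ≠ j ∧ x ∈ A' i ∧ y ∈ A' j) := by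
    intro x y
    exact iff_of_eq (congrFun (congrFun (congrArg SimpleGraph.Subgraph.Adj h) x) y)
  have key : ∀ i, b i ≠ 0 → ∃ j, A' i = A j := by
    intro i hi
    have hne : (A' i).Nonempty := Finset.card_ne_zero.1 (by rw [hA'.1 i]; exact hi)
    obtain ⟨x, hx⟩ := hne
    have hxv : x ∈ (⋃ i, ↑(A i) : Set β) := hv ▸ Set.mem_iUnion.2 ⟨i, hx⟩
    obtain ⟨j, hxj⟩ := Set.mem_iUnion.1 hxv
    refine ⟨j, Finset.Subset.antisymm ?_ ?_⟩
    · intro y hy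
      have hyv : y ∈ (⋃ i, ↑(A i) : Set β) := hv ▸ Set.mem_iUnion.2 ⟨i, hy⟩
      obtain ⟨j', hyj'⟩ := Set.mem_iUnion.1 hyv
      by_cases hjj : j' = j
      · exact hjj ▸ hyj'
      · exfalso
        obtain ⟨i₁, i₂, h12, hx1, hy2⟩ := (hadj x y).1 ⟨j, j', fun hh => hjj hh.symm, hxj, hyj'⟩
        have : i₁ = i := by by_contra hc; exact Dat.disj hA' hc hx1 hx
        have h2 : i₂ = i := by by_contra hc; exact Dat.disj hA' hc hy2 hy
        exact h12 (this.trans h2.symm)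
    · intro y hy
      have hyv : y ∈ (⋃ i, ↑(A' i) : Set β) := hv ▸ Set.mem_iUnion.2 ⟨j, hy⟩
      obtain ⟨i₂, hyi₂⟩ := Set.mem_iUnion.1 hyv
      by_cases hii : i₂ = i
      · exact hii ▸ hyi₂
      · exfalso
        obtain ⟨j₁, j₂, h12, hx1, hy2⟩ := (hadj x y).2 ⟨i, i₂, fun hh => hii hh.symm, hx, hyi₂⟩
        have : j₁ = j := by by_contra hc; exact Dat.disj hA hc hx1 hxj
        have h2 : j₂ = j := by by_contra hc; exact Dat.disj hA hc hy2 hy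
        exact h12 (this.trans h2.symm)
  let t : Fin s → Fin s := fun i => if h : b i = 0 then i else (key i h).choose
  have ht : ∀ i, b i ≠ 0 → A' i = A (t i) := by
    intro i hi
    simp only [t, dif_neg hi]
    exact (key i hi).choose_spec
  have hbt : ∀ i, b (t i) = b i := by
    intro i
    by_cases hi : b i = 0
    · simp [t, dif_pos hi, hi]
    · rw [← hA.1 (t i), ← ht i hi, hA'.1 i]
  have tinj : Function.Injective t := by
    intro i i' hii
    by_cases hi : b i = 0 <;> by_cases hi' : b i' = 0
    · simpa [t, dif_pos hi, dif_pos hi'] using hii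
    · exfalso; apply hi'
      rw [← hbt i', ← hii, hbt i, hi]
    · exfalso; apply hi
      rw [← hbt i, hii, hbt i', hi']
    · have h1 : A' i = A (t i) := ht i hi
      have h2 : A' i' = A (t i') := ht i' hi'
      rw [hii, ← h2] at h1
      by_contra hc
      have hne : (A' i).Nonempty := Finset.card_ne_zero.1 (by rw [hA'.1 i]; exact hi)
      obtain ⟨x, hx⟩ := hne
      exact Dat.disj hA' hc hx (h1 ▸ hx)
  let τ : Equiv.Perm (Fin s) := Equiv.ofBijective t (Finite.injective_iff_bijective.1 tinj)
  have hτmem : τ ∈ Stab b := by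
    constructor
    · exact hbt
    · intro i hi
      show t i = i
      simp [t, dif_pos hi]
  refine ⟨⟨τ, hτmem⟩, ?_, ?_⟩
  · intro i
    by_cases hi : b i = 0
    · have h1 : A' i = ∅ := Finset.card_eq_zero.1 (by rw [hA'.1 i]; exact hi)
      have h2 : A (τ.1 i) = ∅ := Finset.card_eq_zero.1 (by
        rw [hA.1]
        show b (t i) = 0
        rw [hbt i]; exact hi)
      rw [h1]; exact h2.symm
    · exact ht i hi
  · rintro ⟨τ', hτ'⟩ hspec
    apply Subtype.ext
    apply Equiv.ext
    intro i
    by_cases hi : b i = 0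
    · show τ' i = τ i
      rw [hτ'.2 i hi]
      exact (hτmem.2 i hi).symm
    · show τ' i = τ i
      have h1 : A' i = A (τ' i) := hspec i
      have h2 : A' i = A (t i) := ht i hi
      by_contra hc
      have hne : (A (τ' i)).Nonempty := by
        rw [← h1]
        exact Finset.card_ne_zero.1 (by rw [hA'.1 i]; exact hi)
      obtain ⟨x, hx⟩ := hne
      exact Dat.disj hA hc hx ((h2 ▸ h1 ▸ hx : x ∈ A (t i)))

theorem master {s : ℕ} [Fintype α] [DecidableEq β] {b : Fin s → ℕ} {p : β → γ}
    (q : α → Fin s) (F : SimpleGraph α) (G : SimpleGraph β)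
    (hF : ∀ u v, F.Adj u v ↔ q u ≠ q v) (hG : ∀ x y, G.Adj x y ↔ p x ≠ p y)
    (hb : ∀ i, b i = Fintype.card {u // q u = i}) :
    Graph.copyCount F G * Nat.card (Stab b) = Nat.card (Dat b p) := by
  classical
  set C : Set G.Subgraph := {G' | Nonempty (F ≃g G'.coe)} with hC
  let mkc : ↥(Dat b p) → ↥C := fun A => ⟨mk G hG A.1 A.2, mem_copies q F G hF hG hb A.1 A.2⟩
  have msurj : Function.Surjective mkc := by
    rintro ⟨G', hG'⟩
    obtain ⟨A, hA, hmk⟩ := exists_rep q F G hF hG hb G' hG'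
    exact ⟨⟨A, hA⟩, Subtype.ext hmk⟩
  let rep : ↥C → ↥(Dat b p) := Function.surjInv msurj
  have hrep : ∀ C', mkc (rep C') = C' := Function.surjInv_eq msurj
  have heu : ∀ A : ↥(Dat b p), ∃! τ : ↥(Stab b), ∀ i, A.1 i = (rep (mkc A)).1 (τ.1 i) := by
    intro A
    apply eu G hG (rep (mkc A)).2 A.2
    have := congrArg Subtype.val (hrep (mkc A))
    exact this
  let E : ↥(Dat b p) ≃ ↥C × ↥(Stab b) := {
    toFun := fun A => (mkc A, (heu A).exists.choose)
    invFun := fun x => ⟨fun i => (rep x.1).1 (x.2.1 i), act_mem (rep x.1).2 x.2.1 x.2.2⟩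
    left_inv := by
      intro A
      apply Subtype.ext
      funext i
      exact ((heu A).exists.choose_spec i).symm
    right_inv := by
      rintro ⟨C', τ⟩
      set A'' : ↥(Dat b p) := ⟨fun i => (rep C').1 (τ.1 i), act_mem (rep C').2 τ.1 τ.2⟩
        with hA''
      have hmkeq : mkc A'' = C' := by
        apply Subtype.ext
        exact (mk_act G hG (rep C').2 τ.1 τ.2).trans (congrArg Subtype.val (hrep C'))
      have hτeq : (heu A'').exists.choose = τ := by
        apply (heu A'').unique (heu A'').exists.choose_spec
        intro i
        show A''.1 i = (rep (mkc A'')).1 (τ.1 i)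
        rw [hmkeq]
      exact Prod.ext hmkeq hτeq
    }
  have hcard : Nat.card ↥(Dat b p) = Nat.card ↥C * Nat.card ↥(Stab b) := by
    rw [Nat.card_congr E, Nat.card_prod]
  rw [Graph.copyCount, ← Nat.card_coe_set_eq, ← hC, ← hcard]

lemma relabel {β' γ' : Type*} {s : ℕ} {b : Fin s → ℕ} {p : β → γ} {p' : β' → γ'}
    (e : β ≃ β') (h : ∀ x y, p x = p y ↔ p' (e x) = p' (e y)) :
    Nat.card (Dat b p) = Nat.card (Dat b p') := by
  apply Nat.card_congr
  refine ⟨fun A => ⟨fun i => (A.1 i).map e.toEmbedding, ?_⟩,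
          fun A => ⟨fun i => (A.1 i).map e.symm.toEmbedding, ?_⟩, ?_, ?_⟩
  · constructor
    · intro i; rw [Finset.card_map]; exact A.2.1 i
    · intro i j hij x hx y hy
      rw [Finset.mem_map] at hx hy
      obtain ⟨x₀, hx₀, rfl⟩ := hx
      obtain ⟨y₀, hy₀, rfl⟩ := hy
      intro hc
      exact A.2.2 hij x₀ hx₀ y₀ hy₀ ((h x₀ y₀).2 hc)
  · constructor
    · intro i; rw [Finset.card_map]; exact A.2.1 i
    · intro i j hij x hx y hy
      rw [Finset.mem_map] at hx hy
      obtain ⟨x₀, hx₀, rfl⟩ := hx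
      obtain ⟨y₀, hy₀, rfl⟩ := hy
      intro hc
      apply A.2.2 hij x₀ hx₀ y₀ hy₀
      have := (h _ _).1 hc
      simpa using this
  · intro A
    apply Subtype.ext
    funext i
    simp [Finset.map_map]
  · intro A
    apply Subtype.ext
    funext i
    simp [Finset.map_map]

lemma dat_zero {s : ℕ} {b : Fin s → ℕ} {p : β → γ} (h : ∀ i, b i = 0) :
    Nat.card (Dat b p) = 1 := by
  have : Dat b p = {fun _ => (∅ : Finset β)} := by
    ext A
    constructor
    · intro hA
      funext i
      exact Finset.card_eq_zero.1 ((hA.1 i).trans (h i))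
    · rintro rfl
      exact ⟨fun i => by simp [(h i).symm], fun i j hij x hx y hy => by simp at hx⟩
  rw [this, Nat.card_coe_set_eq, Set.ncard_singleton]

lemma dat_single [Fintype β] {s : ℕ} {b : Fin s → ℕ} {p : β → γ} (j : Fin s)
    (h0 : ∀ i, i ≠ j → b i = 0) :
    Nat.card (Dat b p) = (Fintype.card β).choose (b j) := by
  classical
  rw [← Fintype.card_finset_len, ← Nat.card_eq_fintype_card]
  apply Nat.card_congr
  refine ⟨fun A => ⟨A.1 j, A.2.1 j⟩,
    fun t => ⟨fun i => if i = j then t.1 else ∅, ?_, ?_⟩, ?_, ?_⟩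
  · intro i
    by_cases hi : i = j
    · subst hi; simp [t.2]
    · simp [hi, (h0 i hi).symm]
  · intro i₁ i₂ h12 x hx y hy
    by_cases h1 : i₁ = j
    · have h2 : i₂ ≠ j := fun hh => h12 (h1.trans hh.symm)
      simp only [if_neg h2] at hy
      simp at hy
    · simp only [if_neg h1] at hx
      simp at hx
  · intro A
    apply Subtype.ext
    funext i
    by_cases hi : i = j
    · subst hi; simp
    · show (if i = j then A.1 j else ∅) = A.1 i
      rw [if_neg hi]
      exact (Finset.card_eq_zero.1 ((A.2.1 i).trans (h0 i hi))).symm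
  · intro t
    apply Subtype.ext
    show (if j = j then t.1 else ∅) = t.1
    simp

lemma dat_support [Fintype γ] {s : ℕ} {b : Fin s → ℕ} {p : β → γ}
    (h : Nat.card (Dat b p) ≠ 0) :
    Fintype.card {i : Fin s // b i ≠ 0} ≤ Fintype.card γ := by
  obtain ⟨⟨A, hA⟩⟩ := (Nat.card_ne_zero.1 h).1
  have hne : ∀ i : {i : Fin s // b i ≠ 0}, (A i.1).Nonempty := by
    intro i
    exact Finset.card_ne_zero.1 (by rw [hA.1 i.1]; exact i.2)
  apply Fintype.card_le_of_injective (fun i => p (hne i).choose)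
  intro i i' hii
  by_contra hc
  exact hA.2 (fun hh => hc (Subtype.ext hh)) _ (hne i).choose_spec _ (hne i').choose_spec hii

lemma dat_decomp [Fintype β] [DecidableEq β] {s : ℕ} (b : Fin s → ℕ) (p : β → γ)
    (P : γ → Prop) [DecidablePred P] :
    Nat.card (Dat b p) = ∑ d ∈ Finset.Iic b,
      Nat.card (Dat d (fun x : {x : β // P (p x)} => (⟨p x.1, x.2⟩ : {c : γ // P c}))) *
      Nat.card (Dat (b - d)
        (fun x : {x : β // ¬P (p x)} => (⟨p x.1, x.2⟩ : {c : γ // ¬P c}))) := by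
  classical
  set p₁ : {x : β // P (p x)} → {c : γ // P c} := fun x => ⟨p x.1, x.2⟩ with hp₁
  set p₂ : {x : β // ¬P (p x)} → {c : γ // ¬P c} := fun x => ⟨p x.1, x.2⟩ with hp₂
  let φ : ↥(Dat b p) → ↥(Finset.Iic b) := fun A =>
    ⟨fun i => ((A.1 i).filter (fun x => P (p x))).card, by
      rw [Finset.mem_Iic]
      intro i
      exact le_trans (Finset.card_filter_le _ _) (le_of_eq (A.2.1 i))⟩
  have fe : ∀ d : ↥(Finset.Iic b),
      {A // φ A = d} ≃ (↥(Dat d.1 p₁) × ↥(Dat (b - d.1) p₂)) := by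
    intro d
    have hdb : ∀ i, d.1 i ≤ b i := by
      have := d.2; rw [Finset.mem_Iic] at this; exact this
    refine ⟨fun A => (⟨fun i => (A.1.1 i).subtype (fun x => P (p x)), ?_, ?_⟩,
                      ⟨fun i => (A.1.1 i).subtype (fun x => ¬P (p x)), ?_, ?_⟩),
            fun Bs => ⟨⟨fun i => (Bs.1.1 i).map (Function.Embedding.subtype _) ∪
                        (Bs.2.1 i).map (Function.Embedding.subtype _), ?_, ?_⟩, ?_⟩, ?_, ?_⟩
    · -- cards of P-part
      intro i
      have hd : ((A.1.1 i).filter (fun x => P (p x))).card = d.1 i :=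
        congrFun (congrArg Subtype.val A.2) i
      rw [Finset.card_subtype]; exact hd
    · -- ownership of P-part
      intro i j hij x hx y hy
      rw [Finset.mem_subtype] at hx hy
      intro hc
      exact A.1.2.2 hij x.1 hx y.1 hy (congrArg Subtype.val hc)
    · -- cards of ¬P-part
      intro i
      have hd : ((A.1.1 i).filter (fun x => P (p x))).card = d.1 i :=
        congrFun (congrArg Subtype.val A.2) i
      have htot := Finset.card_filter_add_card_filter_not
        (s := A.1.1 i) (fun x => P (p x))
      rw [Finset.card_subtype]
      have hb := A.1.2.1 i
      show _ = (b - d.1) i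
      simp only [Pi.sub_apply]
      omega
    · -- ownership of ¬P-part
      intro i j hij x hx y hy
      rw [Finset.mem_subtype] at hx hy
      intro hc
      exact A.1.2.2 hij x.1 hx y.1 hy (congrArg Subtype.val hc)
    · -- cards of union
      intro i
      have hdisj : Disjoint ((Bs.1.1 i).map (Function.Embedding.subtype _))
          ((Bs.2.1 i).map (Function.Embedding.subtype _)) := by
        rw [Finset.disjoint_left]
        rintro x hx hy
        rw [Finset.mem_map] at hx hy
        obtain ⟨x₀, _, rfl⟩ := hx
        obtain ⟨y₀, _, hy₀⟩ := hy
        have hval : (y₀ : β) = (x₀ : β) := hy₀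
        exact y₀.2 (hval ▸ x₀.2)
      rw [Finset.card_union_of_disjoint hdisj, Finset.card_map, Finset.card_map,
        Bs.1.2.1 i, Bs.2.2.1 i]
      simp only [Pi.sub_apply]
      exact Nat.add_sub_cancel' (hdb i)
    · -- ownership of union
      intro i j hij x hx y hy
      rw [Finset.mem_union] at hx hy
      rcases hx with hx | hx <;> rcases hy with hy | hy <;>
        rw [Finset.mem_map] at hx hy <;>
        obtain ⟨x₀, hx₀, rfl⟩ := hx <;> obtain ⟨y₀, hy₀, rfl⟩ := hy <;> intro hc
      · exact Bs.1.2.2 hij x₀ hx₀ y₀ hy₀ (Subtype.ext hc)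
      · have hc' : p (x₀ : β) = p (y₀ : β) := hc
        exact y₀.2 (hc' ▸ x₀.2)
      · have hc' : p (x₀ : β) = p (y₀ : β) := hc
        exact x₀.2 (hc'.symm ▸ y₀.2)
      · exact Bs.2.2.2 hij x₀ hx₀ y₀ hy₀ (Subtype.ext hc)
    · -- φ of union = d
      apply Subtype.ext
      funext i
      show (_root_.Finset.filter _ _).card = d.1 i
      have hfil : ((Bs.1.1 i).map (Function.Embedding.subtype _) ∪
          (Bs.2.1 i).map (Function.Embedding.subtype _)).filter (fun x => P (p x)) =
          (Bs.1.1 i).map (Function.Embedding.subtype _) := by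
        ext x
        simp only [Finset.mem_filter, Finset.mem_union, Finset.mem_map]
        constructor
        · rintro ⟨hx | hx, hPx⟩
          · exact hx
          · obtain ⟨x₀, _, rfl⟩ := hx
            exact absurd hPx x₀.2
        · rintro ⟨x₀, hx₀, rfl⟩
          exact ⟨Or.inl ⟨x₀, hx₀, rfl⟩, x₀.2⟩
      rw [hfil, Finset.card_map, Bs.1.2.1 i]
    · -- left inverse
      intro A
      apply Subtype.ext
      apply Subtype.ext
      funext i
      show (((A.1.1 i).subtype _).map _ ∪ ((A.1.1 i).subtype _).map _) = A.1.1 i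
      rw [Finset.subtype_map, Finset.subtype_map, Finset.filter_union_filter_not_eq]
    · -- right inverse
      rintro ⟨B₁, B₂⟩
      refine Prod.ext (Subtype.ext ?_) (Subtype.ext ?_) <;> funext i
      · show ((B₁.1 i).map _ ∪ (B₂.1 i).map _).subtype _ = B₁.1 i
        ext x
        rw [Finset.mem_subtype, Finset.mem_union, Finset.mem_map, Finset.mem_map]
        constructor
        · rintro (⟨x₀, hx₀, hval⟩ | ⟨x₀, hx₀, hval⟩)
          · rwa [show x₀ = x from Subtype.ext hval] at hx₀
          · exact absurd ((show (x₀ : β) = (x : β) from hval) ▸ x.2) x₀.2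
        · intro hx
          exact Or.inl ⟨x, hx, rfl⟩
      · show ((B₁.1 i).map _ ∪ (B₂.1 i).map _).subtype _ = B₂.1 i
        ext x
        rw [Finset.mem_subtype, Finset.mem_union, Finset.mem_map, Finset.mem_map]
        constructor
        · rintro (⟨x₀, hx₀, hval⟩ | ⟨x₀, hx₀, hval⟩)
          · exact absurd ((show (x₀ : β) = (x : β) from hval) ▸ x₀.2) x.2
          · rwa [show x₀ = x from Subtype.ext hval] at hx₀
        · intro hx
          exact Or.inr ⟨x, hx, rfl⟩
  haveI : ∀ d : ↥(Finset.Iic b), Fintype {A // φ A = d} := fun d => Fintype.ofFinite _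
  have h1 : Nat.card (Dat b p) = Nat.card (Σ d : ↥(Finset.Iic b), {A // φ A = d}) :=
    Nat.card_congr (Equiv.sigmaFiberEquiv φ).symm
  rw [h1, Nat.card_eq_fintype_card, Fintype.card_sigma]
  rw [← Finset.sum_coe_sort (Finset.Iic b)
    (fun d => Nat.card (Dat d p₁) * Nat.card (Dat (b - d) p₂))]
  apply Finset.sum_congr rfl
  intro d _
  rw [← Nat.card_eq_fintype_card, Nat.card_congr (fe d), Nat.card_prod]

lemma stab_ne_zero {s : ℕ} (b : Fin s → ℕ) : Nat.card (Stab b) ≠ 0 := by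
  have h1 : (1 : Equiv.Perm (Fin s)) ∈ Stab b := ⟨fun i => rfl, fun i _ => rfl⟩
  exact Nat.card_ne_zero.2 ⟨⟨⟨1, h1⟩⟩, (Set.toFinite _).to_subtype⟩

lemma bip_master {s : ℕ} (m n : ℕ) (d : Fin s → ℕ) (j k : Fin s) (hjk : j ≠ k)
    (hz : ∀ i, i ≠ j → i ≠ k → d i = 0) :
    Graph.copyCount (completeBipartiteGraph (Fin (d j)) (Fin (d k)))
        (completeBipartiteGraph (Fin m) (Fin n)) * Nat.card (Stab d) =
      Nat.card (Dat d (Sum.isLeft : Fin m ⊕ Fin n → Bool)) := by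
  apply master (q := Sum.elim (fun _ => j) (fun _ => k))
  · rintro (u | u) (v | v) <;> simp [hjk, hjk.symm, completeBipartiteGraph]
  · rintro (x | x) (y | y) <;> simp
  · intro i
    rw [Fintype.card_congr (Equiv.subtypeSum), Fintype.card_sum]
    by_cases hij : i = j
    · subst hij
      rw [Fintype.card_subtype, Fintype.card_subtype]
      simp [hjk.symm]
    · by_cases hik : i = k
      · subst hik
        rw [Fintype.card_subtype, Fintype.card_subtype]
        simp [hjk, Ne.symm hij]
      · rw [Fintype.card_subtype, Fintype.card_subtype]
        simp [Ne.symm hij, Ne.symm hik, hz i hij hik]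

/-- the admissible bipartite trace shapes -/
def Pairs (a x y : ℕ) : Prop :=
  ((x, y) : ℕ × ℕ) = (a, a) ∨ ((x, y) : ℕ × ℕ) = (a - 1, a) ∨
    ((x, y) : ℕ × ℕ) = (a - 1, a - 1) ∨ ((x, y) : ℕ × ℕ) = (a - 2, a)

lemma bip_comp {s : ℕ} (a m n m' n' : ℕ) (hmn : m + n = m' + n')
    (HB : ∀ x y : ℕ, Pairs a x y →
      Graph.copyCount (completeBipartiteGraph (Fin x) (Fin y))
          (completeBipartiteGraph (Fin m) (Fin n)) ≤
        Graph.copyCount (completeBipartiteGraph (Fin x) (Fin y))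
          (completeBipartiteGraph (Fin m') (Fin n')))
    (d : Fin s → ℕ)
    (hd : ∀ j k, j ≠ k → d j ≠ 0 → d k ≠ 0 → (∀ i, d i ≠ 0 → i = j ∨ i = k) →
      Pairs a (d j) (d k) ∨ Pairs a (d k) (d j)) :
    Nat.card (Dat d (Sum.isLeft : Fin m ⊕ Fin n → Bool)) ≤
      Nat.card (Dat d (Sum.isLeft : Fin m' ⊕ Fin n' → Bool)) := by
  classical
  by_cases hLz : Nat.card (Dat d (Sum.isLeft : Fin m ⊕ Fin n → Bool)) = 0
  · omega
  by_cases hzero : ∀ i, d i = 0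
  · rw [dat_zero hzero, dat_zero hzero]
  push_neg at hzero
  obtain ⟨j, hj⟩ := hzero
  by_cases hone : ∀ i, i ≠ j → d i = 0
  · rw [dat_single j hone, dat_single j hone]
    simp only [Fintype.card_sum, Fintype.card_fin]
    rw [hmn]
  push_neg at hone
  obtain ⟨k, hkj, hk⟩ := hone
  have hsupp := dat_support (γ := Bool) hLz
  have hz : ∀ i, i ≠ j → i ≠ k → d i = 0 := by
    intro i hij hik
    by_contra hi
    have hsub : ({j, k, i} : Finset (Fin s)) ⊆ Finset.univ.filter (fun l => d l ≠ 0) := by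
      intro l hl
      simp only [Finset.mem_insert, Finset.mem_singleton] at hl
      rcases hl with rfl | rfl | rfl <;> simp [hj, hk, hi]
    have hcard : ({j, k, i} : Finset (Fin s)).card = 3 := by
      rw [Finset.card_eq_three]
      exact ⟨j, k, i, Ne.symm hkj, Ne.symm hij, Ne.symm hik, rfl⟩
    have := Finset.card_le_card hsub
    rw [hcard, ← Fintype.card_subtype] at this
    simp only [Fintype.card_bool] at hsupp
    omega
  have hS := stab_ne_zero d
  have hsjk : ∀ i, d i ≠ 0 → i = j ∨ i = k := by
    intro i hi
    by_cases h1 : i = j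
    · exact Or.inl h1
    by_cases h2 : i = k
    · exact Or.inr h2
    exact absurd (hz i h1 h2) hi
  rcases hd j k (Ne.symm hkj) hj hk hsjk with hp | hp
  · have e1 := bip_master (s := s) m n d j k (Ne.symm hkj) hz
    have e2 := bip_master (s := s) m' n' d j k (Ne.symm hkj) hz
    rw [← e1, ← e2]
    exact Nat.mul_le_mul_right _ (HB _ _ hp)
  · have e1 := bip_master (s := s) m n d k j hkj (fun i h1 h2 => hz i h2 h1)
    have e2 := bip_master (s := s) m' n' d k j hkj (fun i h1 h2 => hz i h2 h1)
    rw [← e1, ← e2]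
    exact Nat.mul_le_mul_right _ (HB _ _ hp)

lemma relabel_bip {r : ℕ} (c : Fin r → ℕ) (i₁ i₂ : Fin r) (hne : i₁ ≠ i₂)
    {s : ℕ} (d : Fin s → ℕ) :
    Nat.card (Dat d (fun x : {x : Σ l : Fin r, Fin (c l) // x.1 = i₁ ∨ x.1 = i₂} =>
      (⟨x.1.1, x.2⟩ : {l : Fin r // l = i₁ ∨ l = i₂}))) =
    Nat.card (Dat d (Sum.isLeft : Fin (c i₁) ⊕ Fin (c i₂) → Bool)) := by
  refine relabel ⟨fun x => if h : x.1.1 = i₁ then Sum.inl (Fin.cast (congrArg c h) x.1.2)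
      else Sum.inr (Fin.cast (congrArg c (x.2.resolve_left h)) x.1.2),
    Sum.elim (fun v => ⟨⟨i₁, v⟩, Or.inl rfl⟩) (fun v => ⟨⟨i₂, v⟩, Or.inr rfl⟩), ?_, ?_⟩ ?_
  · rintro ⟨⟨l, v⟩, hP⟩
    by_cases h : l = i₁
    · subst h
      simp only [dif_pos rfl, Sum.elim_inl]
      exact Subtype.ext (congrArg (Sigma.mk l) (Fin.ext (Fin.coe_cast _ _)))
    · have h2 : l = i₂ := hP.resolve_left h
      subst h2
      simp only [dif_neg h, Sum.elim_inr]
      exact Subtype.ext (congrArg (Sigma.mk l) (Fin.ext (Fin.coe_cast _ _)))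
  · rintro (v | v)
    · simp only [Sum.elim_inl, dif_pos rfl]
      exact (dif_pos rfl).trans (congrArg Sum.inl (Fin.ext (Fin.coe_cast _ _)))
    · simp only [Sum.elim_inr, dif_neg (Ne.symm hne)]
      exact (dif_neg (Ne.symm hne)).trans (congrArg Sum.inr (Fin.ext (Fin.coe_cast _ _)))
  · intro x y
    simp only [Subtype.ext_iff]
    by_cases hx : x.1.1 = i₁ <;> by_cases hy : y.1.1 = i₁
    · simp only [Equiv.coe_fn_mk, dif_pos hx, dif_pos hy]
      simp [hx, hy]
    · have hy2 : y.1.1 = i₂ := y.2.resolve_left hy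
      simp only [Equiv.coe_fn_mk, dif_pos hx, dif_neg hy]
      simp [hx, hy2, hne]
    · have hx2 : x.1.1 = i₂ := x.2.resolve_left hx
      simp only [Equiv.coe_fn_mk, dif_neg hx, dif_pos hy]
      simp [hx2, hy, hne.symm]
    · have hx2 : x.1.1 = i₂ := x.2.resolve_left hx
      have hy2 : y.1.1 = i₂ := y.2.resolve_left hy
      simp only [Equiv.coe_fn_mk, dif_neg hx, dif_neg hy]
      simp [hx2, hy2]

lemma relabel_rest {r : ℕ} (c c' : Fin r → ℕ) (i₁ i₂ : Fin r)
    (hsame : ∀ l, l ≠ i₁ → l ≠ i₂ → c' l = c l) {s : ℕ} (d : Fin s → ℕ) :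
    Nat.card (Dat d (fun x : {x : Σ l : Fin r, Fin (c l) // ¬(x.1 = i₁ ∨ x.1 = i₂)} =>
      (⟨x.1.1, x.2⟩ : {l : Fin r // ¬(l = i₁ ∨ l = i₂)}))) =
    Nat.card (Dat d (fun x : {x : Σ l : Fin r, Fin (c' l) // ¬(x.1 = i₁ ∨ x.1 = i₂)} =>
      (⟨x.1.1, x.2⟩ : {l : Fin r // ¬(l = i₁ ∨ l = i₂)}))) := by
  have hc : ∀ (l : Fin r), ¬(l = i₁ ∨ l = i₂) → c l = c' l := by
    intro l hl
    push_neg at hl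
    exact (hsame l hl.1 hl.2).symm
  refine relabel ⟨fun x => ⟨⟨x.1.1, Fin.cast (hc x.1.1 x.2) x.1.2⟩, x.2⟩,
    fun x => ⟨⟨x.1.1, Fin.cast (hc x.1.1 x.2).symm x.1.2⟩, x.2⟩, ?_, ?_⟩ ?_
  · rintro ⟨⟨l, v⟩, hP⟩
    exact Subtype.ext (congrArg (Sigma.mk l) (Fin.ext (by simp [Fin.coe_cast])))
  · rintro ⟨⟨l, v⟩, hP⟩
    exact Subtype.ext (congrArg (Sigma.mk l) (Fin.ext (by simp [Fin.coe_cast])))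
  · intro x y
    exact Iff.rfl

lemma card_compl_pair {r : ℕ} (i₁ i₂ : Fin r) (hne : i₁ ≠ i₂) :
    Fintype.card {l : Fin r // ¬(l = i₁ ∨ l = i₂)} = r - 2 := by
  classical
  rw [Fintype.card_subtype]
  have : Finset.univ.filter (fun l : Fin r => ¬(l = i₁ ∨ l = i₂)) =
      Finset.univ \ {i₁, i₂} := by
    ext l; simp [not_or]
  rw [this, Finset.card_sdiff_of_subset (by simp), Finset.card_univ, Fintype.card_fin,
    Finset.card_insert_of_notMem (by simp [hne]), Finset.card_singleton]

theorem umbrella {α : Type*} [Fintype α] {r : ℕ} (c c' : Fin r → ℕ) (i₁ i₂ : Fin r)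
    (hne : i₁ ≠ i₂)
    (hsame : ∀ l, l ≠ i₁ → l ≠ i₂ → c' l = c l)
    (hmove : c' i₁ + c' i₂ = c i₁ + c i₂)
    (a : ℕ)
    (HB : ∀ x y : ℕ, Pairs a x y →
      Graph.copyCount (completeBipartiteGraph (Fin x) (Fin y))
          (completeBipartiteGraph (Fin (c i₁)) (Fin (c i₂))) ≤
        Graph.copyCount (completeBipartiteGraph (Fin x) (Fin y))
          (completeBipartiteGraph (Fin (c' i₁)) (Fin (c' i₂))))
    {s : ℕ} (q : α → Fin s) (F : SimpleGraph α)
    (hF : ∀ u v, F.Adj u v ↔ q u ≠ q v)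
    (b : Fin s → ℕ) (hb : ∀ i, b i = Fintype.card {u // q u = i})
    (SHAPE : ∀ d : Fin s → ℕ, d ≤ b →
      Fintype.card {i : Fin s // (b - d) i ≠ 0} ≤ r - 2 →
      ∀ j k, j ≠ k → d j ≠ 0 → d k ≠ 0 → (∀ i, d i ≠ 0 → i = j ∨ i = k) →
      Pairs a (d j) (d k) ∨ Pairs a (d k) (d j)) :
    Graph.copyCount F (completeMultipartiteGraph (fun l => Fin (c l))) ≤
      Graph.copyCount F (completeMultipartiteGraph (fun l => Fin (c' l))) := by
  classical
  have hG : ∀ (e : Fin r → ℕ) (x y : Σ l, Fin (e l)),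
      (completeMultipartiteGraph (fun l => Fin (e l))).Adj x y ↔ x.1 ≠ y.1 :=
    fun e x y => Iff.rfl
  have M1 := master q F _ hF (hG c) hb (p := (Sigma.fst : (Σ l, Fin (c l)) → Fin r))
  have M2 := master q F _ hF (hG c') hb (p := (Sigma.fst : (Σ l, Fin (c' l)) → Fin r))
  set P : Fin r → Prop := fun l => l = i₁ ∨ l = i₂ with hP
  have D1 := dat_decomp b (Sigma.fst : (Σ l, Fin (c l)) → Fin r) P
  have D2 := dat_decomp b (Sigma.fst : (Σ l, Fin (c' l)) → Fin r) P
  have key : ∀ d ∈ Finset.Iic b,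
      Nat.card (Dat d (fun x : {x : Σ l : Fin r, Fin (c l) // P x.1} =>
        (⟨x.1.1, x.2⟩ : {l : Fin r // P l}))) *
      Nat.card (Dat (b - d) (fun x : {x : Σ l : Fin r, Fin (c l) // ¬P x.1} =>
        (⟨x.1.1, x.2⟩ : {l : Fin r // ¬P l}))) ≤
      Nat.card (Dat d (fun x : {x : Σ l : Fin r, Fin (c' l) // P x.1} =>
        (⟨x.1.1, x.2⟩ : {l : Fin r // P l}))) *
      Nat.card (Dat (b - d) (fun x : {x : Σ l : Fin r, Fin (c' l) // ¬P x.1} =>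
        (⟨x.1.1, x.2⟩ : {l : Fin r // ¬P l}))) := by
    intro d hd
    rw [← relabel_rest c c' i₁ i₂ hsame (b - d)]
    set R := Nat.card (Dat (b - d) (fun x : {x : Σ l : Fin r, Fin (c l) // ¬P x.1} =>
        (⟨x.1.1, x.2⟩ : {l : Fin r // ¬P l})))
    by_cases hR : R = 0
    · rw [hR]; simp
    apply Nat.mul_le_mul_right
    rw [relabel_bip c i₁ i₂ hne d, relabel_bip c' i₁ i₂ hne d]
    apply bip_comp a _ _ _ _ (by omega) HB
    apply SHAPE d (Finset.mem_Iic.1 hd)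
    have := dat_support (γ := {l : Fin r // ¬P l}) hR
    rwa [card_compl_pair i₁ i₂ hne] at this
  have hsum : Nat.card (Dat b (Sigma.fst : (Σ l, Fin (c l)) → Fin r)) ≤
      Nat.card (Dat b (Sigma.fst : (Σ l, Fin (c' l)) → Fin r)) := by
    rw [D1, D2]
    exact Finset.sum_le_sum key
  rw [← M1, ← M2] at hsum
  have hS := stab_ne_zero b
  exact Nat.le_of_mul_le_mul_right hsum (Nat.pos_of_ne_zero hS)

theorem case_apply {r : ℕ} (c c' : Fin r → ℕ) (i₁ i₂ : Fin r) (hne : i₁ ≠ i₂)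
    (hsame : ∀ l, l ≠ i₁ → l ≠ i₂ → c' l = c l)
    (hmove : c' i₁ + c' i₂ = c i₁ + c i₂) (a : ℕ)
    (HB : ∀ x y : ℕ, Pairs a x y →
      Graph.copyCount (completeBipartiteGraph (Fin x) (Fin y))
          (completeBipartiteGraph (Fin (c i₁)) (Fin (c i₂))) ≤
        Graph.copyCount (completeBipartiteGraph (Fin x) (Fin y))
          (completeBipartiteGraph (Fin (c' i₁)) (Fin (c' i₂))))
    {s : ℕ} (g : Fin r → ℕ) (e' : Fin s → Fin r) (hinj : Function.Injective e')
    (hcov : ∀ i, g i ≠ 0 → ∃ j, e' j = i)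
    (SHAPE : ∀ d : Fin s → ℕ, d ≤ (fun j => g (e' j)) →
      Fintype.card {i : Fin s // ((fun j => g (e' j)) - d) i ≠ 0} ≤ r - 2 →
      ∀ j k, j ≠ k → d j ≠ 0 → d k ≠ 0 → (∀ i, d i ≠ 0 → i = j ∨ i = k) →
      Pairs a (d j) (d k) ∨ Pairs a (d k) (d j)) :
    Graph.copyCount (completeMultipartiteGraph (fun i => Fin (g i)))
        (completeMultipartiteGraph (fun l => Fin (c l))) ≤
      Graph.copyCount (completeMultipartiteGraph (fun i => Fin (g i)))
        (completeMultipartiteGraph (fun l => Fin (c' l))) := by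
  classical
  have hex : ∀ x : Σ i, Fin (g i), ∃! j, e' j = x.1 := by
    intro x
    obtain ⟨j, hj⟩ := hcov x.1 x.2.pos.ne'
    exact ⟨j, hj, fun j' hj' => hinj (hj'.trans hj.symm)⟩
  let q : (Σ i, Fin (g i)) → Fin s := fun x => Fintype.choose _ (hex x)
  have hq : ∀ x, e' (q x) = x.1 := fun x => Fintype.choose_spec _ (hex x)
  apply umbrella c c' i₁ i₂ hne hsame hmove a HB q _ ?_ (fun j => g (e' j)) ?_ SHAPE
  · intro u v
    show u.1 ≠ v.1 ↔ q u ≠ q v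
    constructor
    · intro h hc
      exact h (by rw [← hq u, ← hq v, hc])
    · intro h hc
      exact h (hinj ((hq u).trans ((hq v).symm ▸ hc ▸ rfl)))
  · intro i
    have E : {u : Σ i, Fin (g i) // q u = i} ≃ Fin (g (e' i)) := by
      refine ⟨fun u => Fin.cast (congrArg g (by rw [← hq u.1, u.2])) u.1.2,
        fun v => ⟨⟨e' i, v⟩, hinj (hq ⟨e' i, v⟩)⟩, ?_, ?_⟩
      · rintro ⟨⟨l, v⟩, hu⟩
        have hl : l = e' i := by rw [← hu]; exact (hq ⟨l, v⟩).symm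
        subst hl
        exact Subtype.ext (congrArg (Sigma.mk (e' i)) (Fin.ext (Fin.coe_cast _ _)))
      · intro v
        exact Fin.ext (Fin.coe_cast _ _)
    rw [Fintype.card_congr E, Fintype.card_fin]

lemma shape_full {r : ℕ} (hr : 2 ≤ r) (b d : Fin r → ℕ) (hd : ∀ i, d i ≤ b i)
    (hb : ∀ i, b i ≠ 0)
    (hcard : Fintype.card {i : Fin r // (b - d) i ≠ 0} ≤ r - 2)
    (j k : Fin r) (hjk : j ≠ k) (hsupp : ∀ i, d i ≠ 0 → i = j ∨ i = k) :
    d j = b j ∧ d k = b k := by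
  classical
  rw [Fintype.card_subtype] at hcard
  have base : ∀ i, i ≠ j → i ≠ k → i ∈ Finset.univ.filter (fun i => (b - d) i ≠ 0) := by
    intro i hij hik
    have : d i = 0 := by
      by_contra h
      rcases hsupp i h with h' | h' <;> [exact hij h'; exact hik h']
    simp [Pi.sub_apply, this, hb i]
  constructor
  · by_contra hne'
    have hj : (b - d) j ≠ 0 := by
      have := hd j
      simp only [Pi.sub_apply]
      omega
    have hsub : Finset.univ \ {k} ⊆ Finset.univ.filter (fun i => (b - d) i ≠ 0) := by
      intro i hi
      simp only [Finset.mem_sdiff, Finset.mem_singleton] at hi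
      by_cases hij : i = j
      · subst hij
        simp only [Finset.mem_filter, Finset.mem_univ, true_and]
        exact hj
      · exact base i hij hi.2
    have hc := Finset.card_le_card hsub
    rw [Finset.card_sdiff_of_subset (by simp), Finset.card_univ, Fintype.card_fin,
      Finset.card_singleton] at hc
    omega
  · by_contra hne'
    have hk : (b - d) k ≠ 0 := by
      have := hd k
      simp only [Pi.sub_apply]
      omega
    have hsub : Finset.univ \ {j} ⊆ Finset.univ.filter (fun i => (b - d) i ≠ 0) := by
      intro i hi
      simp only [Finset.mem_sdiff, Finset.mem_singleton] at hi
      by_cases hik : i = k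
      · subst hik
        simp only [Finset.mem_filter, Finset.mem_univ, true_and]
        exact hk
      · exact base i hi.2 hik
    have hc := Finset.card_le_card hsub
    rw [Finset.card_sdiff_of_subset (by simp), Finset.card_univ, Fintype.card_fin,
      Finset.card_singleton] at hc
    omega

lemma shape_one {r s : ℕ} (hs : s + 1 = r) (b d : Fin s → ℕ) (hd : ∀ i, d i ≤ b i)
    (hb : ∀ i, b i ≠ 0)
    (hcard : Fintype.card {i : Fin s // (b - d) i ≠ 0} ≤ r - 2)
    (j k : Fin s) (hjk : j ≠ k) (hsupp : ∀ i, d i ≠ 0 → i = j ∨ i = k) :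
    d j = b j ∨ d k = b k := by
  classical
  rw [Fintype.card_subtype] at hcard
  by_contra hboth
  push_neg at hboth
  have hsub : Finset.univ ⊆ Finset.univ.filter (fun i => (b - d) i ≠ 0) := by
    intro i _
    by_cases hij : i = j
    · subst hij
      have := hd i
      simp only [Finset.mem_filter, Finset.mem_univ, true_and, Pi.sub_apply]
      have := hboth.1
      omega
    by_cases hik : i = k
    · subst hik
      have := hd i
      simp only [Finset.mem_filter, Finset.mem_univ, true_and, Pi.sub_apply]
      have := hboth.2
      omega
    have : d i = 0 := by
      by_contra h
      rcases hsupp i h with h' | h' <;> [exact hij h'; exact hik h']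
    simp [Pi.sub_apply, this, hb i]
  have hc := Finset.card_le_card hsub
  rw [Finset.card_univ, Fintype.card_fin] at hc
  have hsz : 1 ≤ s := Nat.one_le_iff_ne_zero.2 (by rintro rfl; exact j.elim0)
  omega

section conj
variable {r a : ℕ} (hr : 2 ≤ r) (c c' : Fin r → ℕ) (i₁ i₂ : Fin r) (hne : i₁ ≠ i₂)
  (hsame : ∀ l, l ≠ i₁ → l ≠ i₂ → c' l = c l)
  (hmove : c' i₁ + c' i₂ = c i₁ + c i₂)
  (HB : ∀ x y : ℕ, Pairs a x y →
    Graph.copyCount (completeBipartiteGraph (Fin x) (Fin y))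
        (completeBipartiteGraph (Fin (c i₁)) (Fin (c i₂))) ≤
      Graph.copyCount (completeBipartiteGraph (Fin x) (Fin y))
        (completeBipartiteGraph (Fin (c' i₁)) (Fin (c' i₂))))

include hr hne hsame hmove HB

theorem conj1 :
    Graph.copyCount
        (completeMultipartiteGraph (fun i : Fin r => Fin (if (i : ℕ) = 0 then a - 1 else a)))
        (completeMultipartiteGraph (fun l : Fin r => Fin (c l))) ≤
      Graph.copyCount
        (completeMultipartiteGraph (fun i : Fin r => Fin (if (i : ℕ) = 0 then a - 1 else a)))
        (completeMultipartiteGraph (fun l : Fin r => Fin (c' l))) := by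
  rcases Nat.lt_or_ge a 1 with ha | ha
  · have ha0 : a = 0 := by omega
    subst ha0
    apply case_apply c c' i₁ i₂ hne hsame hmove 0 HB _ (Fin.elim0) (fun x => x.elim0) ?_ ?_
    · intro i hi
      by_cases h : (i : ℕ) = 0 <;> simp [h] at hi
    · intro d _ _ j k
      exact j.elim0
  rcases Nat.lt_or_ge a 2 with ha2 | ha2
  · have ha1 : a = 1 := by omega
    subst ha1
    apply case_apply c c' i₁ i₂ hne hsame hmove 1 HB _
      (fun j : Fin (r-1) => (⟨j.1+1, by omega⟩ : Fin r)) ?_ ?_ ?_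
    · intro x y hxy
      have := congrArg Fin.val hxy
      simp only [Fin.val_mk] at this  -- wrong name maybe
      exact Fin.ext (by omega)
    · intro i hi
      have h0 : (i : ℕ) ≠ 0 := by
        intro h
        simp [h] at hi
      have hilt : (i : ℕ) < r := i.2
      exact ⟨⟨i.1 - 1, by omega⟩, Fin.ext (by simp; omega)⟩
    · intro d hd hcard j k hjk hdj hdk hsupp
      have h1 : d j ≤ 1 := by have := Pi.le_def.1 hd j; simpa using this
      have h2 : d k ≤ 1 := by have := Pi.le_def.1 hd k; simpa using this
      refine Or.inl (Or.inl ?_)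
      have e1 : d j = 1 := by omega
      have e2 : d k = 1 := by omega
      rw [e1, e2]
  · apply case_apply c c' i₁ i₂ hne hsame hmove a HB _ id (fun x y h => h)
      (fun i _ => ⟨i, rfl⟩) ?_
    intro d hd hcard j k hjk hdj hdk hsupp
    have hgne : ∀ i : Fin r, (if (i : ℕ) = 0 then a - 1 else a) ≠ 0 := by
      intro i; by_cases h : (i : ℕ) = 0 <;> simp [h] <;> omega
    obtain ⟨hj, hk⟩ := shape_full hr _ d (fun i => Pi.le_def.1 hd i) hgne hcard j k hjk hsupp
    by_cases hj0 : (j : ℕ) = 0 <;> by_cases hk0 : (k : ℕ) = 0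
    · exact absurd (Fin.ext (hj0.trans hk0.symm)) hjk
    · refine Or.inl (Or.inr (Or.inl ?_))
      rw [hj, hk]; simp [hj0, hk0]
    · refine Or.inr (Or.inr (Or.inl ?_))
      rw [hj, hk]; simp [hj0, hk0]
    · refine Or.inl (Or.inl ?_)
      rw [hj, hk]; simp [hj0, hk0]

theorem conj2 :
    Graph.copyCount
        (completeMultipartiteGraph (fun i : Fin r => Fin (if (i : ℕ) = 0 then a - 2 else a)))
        (completeMultipartiteGraph (fun l : Fin r => Fin (c l))) ≤
      Graph.copyCount
        (completeMultipartiteGraph (fun i : Fin r => Fin (if (i : ℕ) = 0 then a - 2 else a)))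
        (completeMultipartiteGraph (fun l : Fin r => Fin (c' l))) := by
  rcases Nat.lt_or_ge a 1 with ha | ha
  · have ha0 : a = 0 := by omega
    subst ha0
    apply case_apply c c' i₁ i₂ hne hsame hmove 0 HB _ (Fin.elim0) (fun x => x.elim0) ?_ ?_
    · intro i hi
      by_cases h : (i : ℕ) = 0 <;> simp [h] at hi
    · intro d _ _ j k
      exact j.elim0
  rcases Nat.lt_or_ge a 2 with ha2 | ha2
  · have ha1 : a = 1 := by omega
    subst ha1
    apply case_apply c c' i₁ i₂ hne hsame hmove 1 HB _
      (fun j : Fin (r-1) => (⟨j.1+1, by omega⟩ : Fin r)) ?_ ?_ ?_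
    · intro x y hxy
      have := congrArg Fin.val hxy
      simp only [] at this
      exact Fin.ext (by omega)
    · intro i hi
      have h0 : (i : ℕ) ≠ 0 := by
        intro h
        simp [h] at hi
      have hilt : (i : ℕ) < r := i.2
      exact ⟨⟨i.1 - 1, by omega⟩, Fin.ext (by simp; omega)⟩
    · intro d hd hcard j k hjk hdj hdk hsupp
      have h1 : d j ≤ 1 := by have := Pi.le_def.1 hd j; simpa using this
      have h2 : d k ≤ 1 := by have := Pi.le_def.1 hd k; simpa using this
      refine Or.inl (Or.inl ?_)
      have e1 : d j = 1 := by omega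
      have e2 : d k = 1 := by omega
      rw [e1, e2]
  rcases Nat.lt_or_ge a 3 with ha3 | ha3
  · have ha2' : a = 2 := by omega
    subst ha2'
    apply case_apply c c' i₁ i₂ hne hsame hmove 2 HB _
      (fun j : Fin (r-1) => (⟨j.1+1, by omega⟩ : Fin r)) ?_ ?_ ?_
    · intro x y hxy
      have := congrArg Fin.val hxy
      simp only [] at this
      exact Fin.ext (by omega)
    · intro i hi
      have h0 : (i : ℕ) ≠ 0 := by
        intro h
        simp [h] at hi
      have hilt : (i : ℕ) < r := i.2
      exact ⟨⟨i.1 - 1, by omega⟩, Fin.ext (by simp; omega)⟩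
    · intro d hd hcard j k hjk hdj hdk hsupp
      have hb2 : ∀ i : Fin (r-1),
          (if (((⟨i.1+1, by omega⟩ : Fin r)) : ℕ) = 0 then 2 - 2 else 2) = 2 := by
        intro i; simp
      have hone := shape_one (by omega) _ d (fun i => Pi.le_def.1 hd i)
        (fun i => by rw [hb2 i]; omega) hcard j k hjk hsupp
      have h1 : d j ≤ 2 := by have := Pi.le_def.1 hd j; rwa [hb2 j] at this
      have h2 : d k ≤ 2 := by have := Pi.le_def.1 hd k; rwa [hb2 k] at this
      rw [hb2 j, hb2 k] at hone
      rcases hone with hfj | hfk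
      · rcases Nat.lt_or_ge (d k) 2 with hdk2 | hdk2
        · have e2 : d k = 1 := by omega
          refine Or.inr (Or.inr (Or.inl ?_))
          rw [hfj, e2]
        · have e2 : d k = 2 := by omega
          refine Or.inl (Or.inl ?_)
          rw [hfj, e2]
      · rcases Nat.lt_or_ge (d j) 2 with hdj2 | hdj2
        · have e1 : d j = 1 := by omega
          refine Or.inl (Or.inr (Or.inl ?_))
          rw [hfk, e1]
        · have e1 : d j = 2 := by omega
          refine Or.inl (Or.inl ?_)
          rw [hfk, e1]
  · apply case_apply c c' i₁ i₂ hne hsame hmove a HB _ id (fun x y h => h)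
      (fun i _ => ⟨i, rfl⟩) ?_
    intro d hd hcard j k hjk hdj hdk hsupp
    have hgne : ∀ i : Fin r, (if (i : ℕ) = 0 then a - 2 else a) ≠ 0 := by
      intro i; by_cases h : (i : ℕ) = 0 <;> simp [h] <;> omega
    obtain ⟨hj, hk⟩ := shape_full hr _ d (fun i => Pi.le_def.1 hd i) hgne hcard j k hjk hsupp
    by_cases hj0 : (j : ℕ) = 0 <;> by_cases hk0 : (k : ℕ) = 0
    · exact absurd (Fin.ext (hj0.trans hk0.symm)) hjk
    · refine Or.inl (Or.inr (Or.inr (Or.inr ?_)))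
      rw [hj, hk]; simp [hj0, hk0]
    · refine Or.inr (Or.inr (Or.inr (Or.inr ?_)))
      rw [hj, hk]; simp [hj0, hk0]
    · refine Or.inl (Or.inl ?_)
      rw [hj, hk]; simp [hj0, hk0]

theorem conj3 :
    Graph.copyCount
        (completeMultipartiteGraph (fun i : Fin r => Fin (if (i : ℕ) ≤ 1 then a - 1 else a)))
        (completeMultipartiteGraph (fun l : Fin r => Fin (c l))) ≤
      Graph.copyCount
        (completeMultipartiteGraph (fun i : Fin r => Fin (if (i : ℕ) ≤ 1 then a - 1 else a)))
        (completeMultipartiteGraph (fun l : Fin r => Fin (c' l))) := by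
  rcases Nat.lt_or_ge a 1 with ha | ha
  · have ha0 : a = 0 := by omega
    subst ha0
    apply case_apply c c' i₁ i₂ hne hsame hmove 0 HB _ (Fin.elim0) (fun x => x.elim0) ?_ ?_
    · intro i hi
      by_cases h : (i : ℕ) ≤ 1 <;> simp [h] at hi
    · intro d _ _ j k
      exact j.elim0
  rcases Nat.lt_or_ge a 2 with ha2 | ha2
  · have ha1 : a = 1 := by omega
    subst ha1
    apply case_apply c c' i₁ i₂ hne hsame hmove 1 HB _
      (fun j : Fin (r-2) => (⟨j.1+2, by omega⟩ : Fin r)) ?_ ?_ ?_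
    · intro x y hxy
      have := congrArg Fin.val hxy
      simp only [] at this
      exact Fin.ext (by omega)
    · intro i hi
      have h0 : ¬((i : ℕ) ≤ 1) := by
        intro h
        simp [h] at hi
      have hilt : (i : ℕ) < r := i.2
      exact ⟨⟨i.1 - 2, by omega⟩, Fin.ext (by simp; omega)⟩
    · intro d hd hcard j k hjk hdj hdk hsupp
      have h1 : d j ≤ 1 := by
        have := Pi.le_def.1 hd j
        simpa using this
      have h2 : d k ≤ 1 := by
        have := Pi.le_def.1 hd k
        simpa using this
      refine Or.inl (Or.inl ?_)
      have e1 : d j = 1 := by omega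
      have e2 : d k = 1 := by omega
      rw [e1, e2]
  · apply case_apply c c' i₁ i₂ hne hsame hmove a HB _ id (fun x y h => h)
      (fun i _ => ⟨i, rfl⟩) ?_
    intro d hd hcard j k hjk hdj hdk hsupp
    have hgne : ∀ i : Fin r, (if (i : ℕ) ≤ 1 then a - 1 else a) ≠ 0 := by
      intro i; by_cases h : (i : ℕ) ≤ 1 <;> simp [h] <;> omega
    obtain ⟨hj, hk⟩ := shape_full hr _ d (fun i => Pi.le_def.1 hd i) hgne hcard j k hjk hsupp
    by_cases hj0 : (j : ℕ) ≤ 1 <;> by_cases hk0 : (k : ℕ) ≤ 1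
    · refine Or.inl (Or.inr (Or.inr (Or.inl ?_)))
      rw [hj, hk]; simp [hj0, hk0]
    · refine Or.inl (Or.inr (Or.inl ?_))
      rw [hj, hk]; simp [hj0, hk0]
    · refine Or.inr (Or.inr (Or.inl ?_))
      rw [hj, hk]; simp [hj0, hk0]
    · refine Or.inl (Or.inl ?_)
      rw [hj, hk]; simp [hj0, hk0]

end conj
end S19

/-- if `T'` is obtained from a complete `r`-partite graph `T` by moving
vertices between two parts so that the number of edges and the numbers of copies of
`K_{a,a}`, `K_{a-1,a}`, `K_{a-1,a-1}`, `K_{a-2,a}` within the union of the two parts do not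
decrease, then the numbers of copies of `K_{a-1,a,…,a}`, `K_{a-2,a,…,a}` and
`K_{a-1,a-1,a,…,a}` do not decrease. -/
theorem stmt_19 (r a : ℕ) (hr : 2 ≤ r) (c c' : Fin r → ℕ) (i₁ i₂ : Fin r) (hne : i₁ ≠ i₂)
    (hsame : ∀ l, l ≠ i₁ → l ≠ i₂ → c' l = c l)
    (hmove : c' i₁ + c' i₂ = c i₁ + c i₂)
    (hedges : (completeMultipartiteGraph (fun l : Fin r => Fin (c l))).edgeSet.ncard ≤
      (completeMultipartiteGraph (fun l : Fin r => Fin (c' l))).edgeSet.ncard)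
    (hbip : ∀ x y : ℕ,
      ((x, y) = (a, a) ∨ (x, y) = (a - 1, a) ∨ (x, y) = (a - 1, a - 1) ∨
        (x, y) = (a - 2, a)) →
      Graph.copyCount (completeBipartiteGraph (Fin x) (Fin y))
          (completeBipartiteGraph (Fin (c i₁)) (Fin (c i₂))) ≤
        Graph.copyCount (completeBipartiteGraph (Fin x) (Fin y))
          (completeBipartiteGraph (Fin (c' i₁)) (Fin (c' i₂)))) :
    Graph.copyCount
        (completeMultipartiteGraph (fun i : Fin r => Fin (if (i : ℕ) = 0 then a - 1 else a)))
        (completeMultipartiteGraph (fun l : Fin r => Fin (c l))) ≤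
      Graph.copyCount
        (completeMultipartiteGraph (fun i : Fin r => Fin (if (i : ℕ) = 0 then a - 1 else a)))
        (completeMultipartiteGraph (fun l : Fin r => Fin (c' l))) ∧
    Graph.copyCount
        (completeMultipartiteGraph (fun i : Fin r => Fin (if (i : ℕ) = 0 then a - 2 else a)))
        (completeMultipartiteGraph (fun l : Fin r => Fin (c l))) ≤
      Graph.copyCount
        (completeMultipartiteGraph (fun i : Fin r => Fin (if (i : ℕ) = 0 then a - 2 else a)))
        (completeMultipartiteGraph (fun l : Fin r => Fin (c' l))) ∧
    Graph.copyCount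
        (completeMultipartiteGraph (fun i : Fin r => Fin (if (i : ℕ) ≤ 1 then a - 1 else a)))
        (completeMultipartiteGraph (fun l : Fin r => Fin (c l))) ≤
      Graph.copyCount
        (completeMultipartiteGraph (fun i : Fin r => Fin (if (i : ℕ) ≤ 1 then a - 1 else a)))
        (completeMultipartiteGraph (fun l : Fin r => Fin (c' l))) := by
  refine ⟨S19.conj1 hr c c' i₁ i₂ hne hsame hmove (fun x y h => hbip x y h),
    S19.conj2 hr c c' i₁ i₂ hne hsame hmove (fun x y h => hbip x y h),
    S19.conj3 hr c c' i₁ i₂ hne hsame hmove (fun x y h => hbip x y h)⟩
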